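/- arXiv:2201.08507 — 2 statements merged into one kernel-verified Lean document; each statement's English description precedes it below -/
import Mathlib

section
/- Suppose a nonnegative sequence {a(t)} satisfies ∑_{t=1}^K a(t) z^{-t} ≤ B + c · ∑_{t=1}^K z^{-t} for all K ≥ 1 and all z ∈ (z̄, 1), where B, c > 0 and 0 ≤ z̄ < 1. Then for every t ≥ 1, a(t) ≤ B · z̄^t + c/(1 − z̄). -/
/-- Linear convergence up to a constant from a z-transform bound (Lemma 4). -/
theorem linear_rate_from_ztransform_bound (a : ℕ → ℝ) (ha : ∀ t, 0 ≤ a t)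
    (B c zbar : ℝ) (hB : 0 < B) (hc : 0 < c) (hz0 : 0 ≤ zbar) (hz1 : zbar < 1)
    (h : ∀ K : ℕ, 1 ≤ K → ∀ z : ℝ, zbar < z → z < 1 →
      ∑ t ∈ Finset.Icc 1 K, a t * (1 / z) ^ t ≤
        B + c * ∑ t ∈ Finset.Icc 1 K, (1 / z) ^ t) :
    ∀ t : ℕ, 1 ≤ t → a t ≤ B * zbar ^ t + c / (1 - zbar) := by
  intro t ht
  -- Step 1: pointwise bound for every z ∈ (zbar, 1)
  have key : ∀ z : ℝ, zbar < z → z < 1 → a t ≤ B * z ^ t + c / (1 - z) := by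
    intro z hzl hzr
    have hzpos : 0 < z := lt_of_le_of_lt hz0 hzl
    have hzne : z ≠ 0 := ne_of_gt hzpos
    have h1 := h t ht z hzl hzr
    -- single term ≤ sum
    have hmem : t ∈ Finset.Icc 1 t := Finset.mem_Icc.mpr ⟨ht, le_refl t⟩
    have hsingle : a t * (1 / z) ^ t ≤ ∑ s ∈ Finset.Icc 1 t, a s * (1 / z) ^ s := by
      apply Finset.single_le_sum (fun s _ => ?_) hmem
      exact mul_nonneg (ha s) (pow_nonneg (by positivity) s)
    -- geometric sum bound : ∑_{s=1}^t (1/z)^s ≤ (1/z)^t / (1 - z)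
    have hgeom : ∑ s ∈ Finset.Icc 1 t, (1 / z) ^ s ≤ (1 / z) ^ t / (1 - z) := by
      have hrw : ∀ s ∈ Finset.Icc 1 t, (1 / z) ^ s = (1 / z) ^ t * z ^ (t - s) := by
        intro s hs
        rw [Finset.mem_Icc] at hs
        have : z ^ (t - s) * z ^ s = z ^ t := by
          rw [← pow_add]
          congr 1
          omega
        rw [one_div_pow, one_div_pow, ← this]
        field_simp
      rw [Finset.sum_congr rfl hrw, ← Finset.mul_sum]
      have hbij : ∑ s ∈ Finset.Icc 1 t, z ^ (t - s) = ∑ j ∈ Finset.range t, z ^ j := by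
        apply Finset.sum_nbij' (fun s => t - s) (fun j => t - j)
        · intro s hs; rw [Finset.mem_Icc] at hs; rw [Finset.mem_range]; omega
        · intro j hj; rw [Finset.mem_range] at hj; rw [Finset.mem_Icc]; omega
        · intro s hs; rw [Finset.mem_Icc] at hs; omega
        · intro j hj; rw [Finset.mem_range] at hj; omega
        · intro s hs; rfl
      rw [hbij, div_eq_mul_inv]
      apply mul_le_mul_of_nonneg_left _ (pow_nonneg (by positivity) t)
      rw [Finset.range_eq_Ico]
      calc ∑ i ∈ Finset.Ico 0 t, z ^ i ≤ z ^ 0 / (1 - z) :=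
            geom_sum_Ico_le_of_lt_one (le_of_lt hzpos) hzr
        _ = (1 - z)⁻¹ := by rw [pow_zero, one_div]
    have hstep : a t * (1 / z) ^ t ≤ B + c * ((1 / z) ^ t / (1 - z)) :=
      le_trans (le_trans hsingle h1)
        (by gcongr)
    -- divide by (1/z)^t
    have hwpos : 0 < (1 / z) ^ t := pow_pos (by positivity) t
    calc a t = a t * (1 / z) ^ t / (1 / z) ^ t := by field_simp
      _ ≤ (B + c * ((1 / z) ^ t / (1 - z))) / (1 / z) ^ t := by gcongr
      _ = B * z ^ t + c / (1 - z) := by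
          have h1z : (1:ℝ) - z ≠ 0 := ne_of_gt (by linarith)
          rw [one_div_pow]
          field_simp
  -- Step 2: take the limit z → zbar⁺
  have hne : (1:ℝ) - zbar ≠ 0 := ne_of_gt (by linarith)
  have hcont : Filter.Tendsto (fun z : ℝ => B * z ^ t + c / (1 - z)) (nhdsWithin zbar (Set.Ioi zbar))
      (nhds (B * zbar ^ t + c / (1 - zbar))) := by
    apply Filter.Tendsto.mono_left _ nhdsWithin_le_nhds
    have hcat : ContinuousAt (fun z : ℝ => c / (1 - z)) zbar :=
      ContinuousAt.div continuousAt_const (continuousAt_const.sub continuousAt_id)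
        (by simpa using hne)
    exact (((continuous_const.mul (continuous_pow t)).continuousAt.add hcat).tendsto)
  have hev : ∀ᶠ z in nhdsWithin zbar (Set.Ioi zbar), a t ≤ B * z ^ t + c / (1 - z) := by
    filter_upwards [Ioo_mem_nhdsGT_of_mem (Set.mem_Ico.mpr ⟨le_refl zbar, hz1⟩)] with z hz
    exact key z hz.1 hz.2
  exact ge_of_tendsto hcont hev
end

section
/- Let θ̂, θ ∈ ℝ^d with ‖θ‖₁ ≤ r and ‖θ̂‖₁ = r, and let S ⊆ {1,…,d} be a set of coordinates with |S| = s such that θ* ∈ ℝ^d is supported on S (i.e., θ*_j = 0 for j ∉ S). Then ‖θ − θ̂‖₁ ≤ 2√s · ‖θ − θ̂‖₂ + 2‖θ̂ − θ*‖₁ + 2√s · ‖θ̂ − θ*‖₂. -/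
/-- Approximate sparsity of feasible points of the ℓ₁-constrained LASSO (Lemma 1). -/
theorem l1_ball_approx_sparsity (d s : ℕ) (r : ℝ) (hr : 0 < r)
    (θstar θhat θ : Fin d → ℝ) (S : Finset (Fin d)) (hS : S.card = s)
    (hsupp : ∀ j ∉ S, θstar j = 0)
    (hθ : ∑ i, |θ i| ≤ r) (hθhat : ∑ i, |θhat i| = r) :
    ∑ i, |θ i - θhat i| ≤
      2 * Real.sqrt s * Real.sqrt (∑ i, (θ i - θhat i) ^ 2) +
        (2 * ∑ i, |θhat i - θstar i| +
          2 * Real.sqrt s * Real.sqrt (∑ i, (θhat i - θstar i) ^ 2)) := by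
  set Δ : Fin d → ℝ := fun i => θ i - θhat i with hΔ
  set ν : Fin d → ℝ := fun i => θhat i - θstar i with hν
  have hA : ∑ i ∈ S, |Δ i| ≤ Real.sqrt s * Real.sqrt (∑ i, Δ i ^ 2) := by
    have h1 : (∑ i ∈ S, |Δ i|) ^ 2 ≤ (s : ℝ) * ∑ i, Δ i ^ 2 := by
      calc (∑ i ∈ S, |Δ i|) ^ 2 ≤ S.card * ∑ i ∈ S, |Δ i| ^ 2 :=
            sq_sum_le_card_mul_sum_sq
        _ ≤ (s : ℝ) * ∑ i, Δ i ^ 2 := by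
            rw [hS]
            gcongr
            calc ∑ i ∈ S, |Δ i| ^ 2 = ∑ i ∈ S, Δ i ^ 2 := by
                  simp [sq_abs]
              _ ≤ ∑ i, Δ i ^ 2 := Finset.sum_le_sum_of_subset_of_nonneg
                  (Finset.subset_univ S) (fun i _ _ => sq_nonneg _)
    have h2 : (0:ℝ) ≤ ∑ i ∈ S, |Δ i| := Finset.sum_nonneg fun i _ => abs_nonneg _
    calc ∑ i ∈ S, |Δ i| = Real.sqrt ((∑ i ∈ S, |Δ i|) ^ 2) := (Real.sqrt_sq h2).symm
      _ ≤ Real.sqrt ((s : ℝ) * ∑ i, Δ i ^ 2) := Real.sqrt_le_sqrt h1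
      _ = Real.sqrt s * Real.sqrt (∑ i, Δ i ^ 2) := Real.sqrt_mul (Nat.cast_nonneg s) _
  -- split sums
  have hsplit : ∀ f : Fin d → ℝ, ∑ i, f i = ∑ i ∈ S, f i + ∑ i ∈ Sᶜ, f i := by
    intro f; rw [Finset.sum_add_sum_compl]
  -- on Sᶜ, |Δ j| ≤ |θ j| + |ν j|
  have h3 : ∑ i ∈ Sᶜ, |Δ i| ≤ ∑ i ∈ Sᶜ, |θ i| + ∑ i ∈ Sᶜ, |ν i| := by
    rw [← Finset.sum_add_distrib]
    apply Finset.sum_le_sum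
    intro i hi
    have h0 : θstar i = 0 := hsupp i (by simpa using hi)
    have : Δ i = θ i - ν i := by simp [hΔ, hν, h0]
    rw [this]
    exact abs_sub _ _
  -- ∑_{Sᶜ} |θ| ≤ r - ∑_S |θ|
  have h4 : ∑ i ∈ Sᶜ, |θ i| ≤ r - ∑ i ∈ S, |θ i| := by
    have := hsplit (fun i => |θ i|)
    linarith
  -- r = ∑_S |θ̂| + ∑_{Sᶜ} |ν|
  have h5 : r = ∑ i ∈ S, |θhat i| + ∑ i ∈ Sᶜ, |ν i| := by
    rw [← hθhat, hsplit (fun i => |θhat i|)]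
    congr 1
    apply Finset.sum_congr rfl
    intro i hi
    have h0 : θstar i = 0 := hsupp i (by simpa using hi)
    simp [hν, h0]
  have h6 : ∑ i ∈ S, |θhat i| - ∑ i ∈ S, |θ i| ≤ ∑ i ∈ S, |Δ i| := by
    rw [← Finset.sum_sub_distrib]
    apply Finset.sum_le_sum
    intro i _
    have : |Δ i| = |θhat i - θ i| := by rw [hΔ, abs_sub_comm]
    rw [this]
    exact abs_sub_abs_le_abs_sub _ _
  have hν1 : ∑ i ∈ Sᶜ, |ν i| ≤ ∑ i, |ν i| :=
    Finset.sum_le_sum_of_subset_of_nonneg (Finset.subset_univ _)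
      (fun i _ _ => abs_nonneg _)
  have hν2 : (0:ℝ) ≤ 2 * Real.sqrt s * Real.sqrt (∑ i, ν i ^ 2) := by
    positivity
  have hmain : ∑ i, |Δ i| ≤ 2 * ∑ i ∈ S, |Δ i| + 2 * ∑ i, |ν i| := by
    have := hsplit (fun i => |Δ i|)
    linarith
  linarith
end
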